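/- arXiv:2103.09333 — 2 statements merged into one kernel-verified Lean document; each statement's English description precedes it below -/
import Mathlib

section
/- Let L_n ⊆ S_n be a zigzag language and let π, ρ, σ be three consecutive permutations in J(L_n). If ρ is obtained from π by a jump of a value j < n, σ is obtained from ρ by a jump of the value n, and the value j is neither at the first nor at the last position of p^{n−j}(ρ), then s_{n,i}^ρ = s_{n,i}^π for all i = 1,…,n−1. -/
/-!
Shared definitions: permutations in one-line notation as lists of naturals,
deletion `p`, insertion `c_i`, zigzag languages, the Gray code sequence `J(L_n)`,
jumps, minimal jumps, the auxiliary sequences `s_n^π`, Algorithm M,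
vincular pattern containment and 2-clumped permutations.
-/

/-- `S_n`: permutations of `{1,…,n}` in one-line notation, as lists of naturals. -/
def SymmList (n : ℕ) : Set (List ℕ) := {l | List.Perm l (List.range' 1 n)}

/-- The identity permutation `id_n = 1 2 ⋯ n`. -/
def idPerm (n : ℕ) : List ℕ := List.range' 1 n

/-- `p(π)`: delete the largest entry `n = π.length` from the permutation `π ∈ S_n`. -/
def pdel (l : List ℕ) : List ℕ := l.erase l.length

/-- `c_i(π)`: insert the new largest value `π.length + 1` at (1-indexed) position `i`. -/
def cins (i : ℕ) (l : List ℕ) : List ℕ :=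
  l.take (i - 1) ++ (l.length + 1) :: l.drop (i - 1)

/-- Zigzag languages of permutations: `L_0 = {ε}` is a zigzag language, and
`L ⊆ S_{n+1}` is a zigzag language if `p(L)` is a zigzag language and
`c_1(π), c_{n+1}(π) ∈ L` for every `π ∈ p(L)`. -/
inductive IsZigzag : ℕ → Set (List ℕ) → Prop
  | zero : IsZigzag 0 {[]}
  | succ (n : ℕ) (L : Set (List ℕ)) :
      L ⊆ SymmList (n + 1) →
      IsZigzag n (pdel '' L) →
      (∀ l ∈ pdel '' L, cins 1 l ∈ L ∧ cins (n + 1) l ∈ L) →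
      IsZigzag (n + 1) L

/-- `→c(π)`: the sequence of those `c_1(π),…,c_n(π)` lying in `L`,
in increasing order of the insertion position. -/
noncomputable def cSeq (L : Set (List ℕ)) (n : ℕ) (l : List ℕ) : List (List ℕ) :=
  ((List.range' 1 n).map (fun i => cins i l)).filter
    (fun x => @decide (x ∈ L) (Classical.propDecidable _))

/-- The Gray code sequence `J(L_n)` of a language `L ⊆ S_n`:
`J(L_0) = ε`, and `J(L_{n+1})` is obtained from `J(L_n)` (for the language
`p(L)`) by replacing its entries alternately by `←c(π)` (the reverse of
`→c(π)`) and `→c(π)`. -/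
noncomputable def Jseq : ℕ → Set (List ℕ) → List (List ℕ)
  | 0, _ => [[]]
  | (n + 1), L =>
      (((Jseq n (pdel '' L)).mapIdx
        (fun k π => if k % 2 = 0 then (cSeq L (n + 1) π).reverse
                    else cSeq L (n + 1) π)).flatten)

/-- `ρ` is obtained from `π` by a right jump of the value `v` by `d` steps. -/
def RightJump (π ρ : List ℕ) (v d : ℕ) : Prop :=
  0 < d ∧ ∃ A B C : List ℕ, B.length = d ∧ (∀ x ∈ B, x < v) ∧
    π = A ++ v :: (B ++ C) ∧ ρ = A ++ (B ++ v :: C)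

/-- `ρ` is obtained from `π` by a left jump of the value `v` by `d` steps. -/
def LeftJump (π ρ : List ℕ) (v d : ℕ) : Prop := RightJump ρ π v d

/-- A right jump that is minimal with respect to `L`: every right jump of the
same value by fewer steps yields a permutation not in `L`. -/
def MinimalRightJump (L : Set (List ℕ)) (π ρ : List ℕ) (v d : ℕ) : Prop :=
  RightJump π ρ v d ∧ ∀ d' ρ', d' < d → RightJump π ρ' v d' → ρ' ∉ L

/-- A left jump that is minimal with respect to `L`. -/
def MinimalLeftJump (L : Set (List ℕ)) (π ρ : List ℕ) (v d : ℕ) : Prop :=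
  LeftJump π ρ v d ∧ ∀ d' ρ', d' < d → LeftJump π ρ' v d' → ρ' ∉ L

/-- The auxiliary sequence `s_n^π` of a permutation `π` occurring in `J(L_n)`,
as a function of the index `i ∈ {1,…,n}` (value `0` outside this range). -/
noncomputable def sVec : ℕ → Set (List ℕ) → List ℕ → ℕ → ℕ
  | 0, _, _, _ => 0
  | 1, _, _, i => if i = 1 then 1 else 0
  | (n + 2), L, π, i =>
      let L' := pdel '' L
      let π' := pdel π
      let cbar := if ((Jseq (n + 1) L').idxOf π') % 2 = 0
                  then (cSeq L (n + 2) π').reverse else cSeq L (n + 2) π'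
      if cbar.getLast? = some π then
        (if i ≤ n then sVec (n + 1) L' π' i
         else if i = n + 1 then n + 1
         else if i = n + 2 then sVec (n + 1) L' π' (n + 1) else 0)
      else
        (if i ≤ n + 1 then sVec (n + 1) L' π' i
         else if i = n + 2 then n + 2 else 0)

/-- `j` is at the first position of `l`, or the entry immediately left of `j`
in `l` is larger than `j`. -/
def AtLeftTurn (l : List ℕ) (j : ℕ) : Prop :=
  ∃ A B : List ℕ, l = A ++ j :: B ∧ (A = [] ∨ ∃ x, A.getLast? = some x ∧ j < x)

/-- `j` is at the last position of `l`, or the entry immediately right of `j`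
in `l` is larger than `j`. -/
def AtRightTurn (l : List ℕ) (j : ℕ) : Prop :=
  ∃ A B : List ℕ, l = A ++ j :: B ∧ (B = [] ∨ ∃ x, B.head? = some x ∧ j < x)

/-- `j` is not at the first position of `l`, and the entry immediately left of
`j` in `l` is smaller than `j`. -/
def SmallerLeftNeighbor (l : List ℕ) (j : ℕ) : Prop :=
  ∃ A B : List ℕ, ∃ x, l = A ++ j :: B ∧ A.getLast? = some x ∧ x < j

/-- `j` is not at the last position of `l`, and the entry immediately right of
`j` in `l` is smaller than `j`. -/
def SmallerRightNeighbor (l : List ℕ) (j : ℕ) : Prop :=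
  ∃ A B : List ℕ, ∃ x, l = A ++ j :: B ∧ B.head? = some x ∧ x < j

/-- A state of Algorithm M: the current permutation `π` and the auxiliary
arrays `o` and `s`; `o j = false` encodes direction `L` (left) and
`o j = true` encodes `R` (right). -/
structure MState where
  perm : List ℕ
  o : ℕ → Bool
  s : ℕ → ℕ

/-- The initial state of Algorithm M (step M1): `π = id_n`, `o_j = L`, `s_j = j`. -/
def MInit (n : ℕ) : MState := ⟨idPerm n, fun _ => false, fun j => j⟩

/-- One iteration (steps M3–M5) of Algorithm M on a language `L ⊆ S_n`:
with `j := s_n ≠ 1`, the permutation jumps minimally in the direction `o_j`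
(step M4), and the arrays `o`, `s` are updated as in step M5. -/
def MStep (L : Set (List ℕ)) (n : ℕ) (σ σ' : MState) : Prop :=
  σ.s n ≠ 1 ∧
  σ'.perm ∈ L ∧
  ((σ.o (σ.s n) = false ∧ ∃ d, MinimalLeftJump L σ.perm σ'.perm (σ.s n) d) ∨
   (σ.o (σ.s n) = true ∧ ∃ d, MinimalRightJump L σ.perm σ'.perm (σ.s n) d)) ∧
  (((σ.o (σ.s n) = false ∧ AtLeftTurn σ'.perm (σ.s n)) ∨
    (σ.o (σ.s n) = true ∧ AtRightTurn σ'.perm (σ.s n))) →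
      σ'.o = Function.update σ.o (σ.s n) (!σ.o (σ.s n)) ∧
      σ'.s = Function.update (Function.update (Function.update σ.s n n) (σ.s n)
               ((Function.update σ.s n n) (σ.s n - 1))) (σ.s n - 1) (σ.s n - 1)) ∧
  (¬ ((σ.o (σ.s n) = false ∧ AtLeftTurn σ'.perm (σ.s n)) ∨
      (σ.o (σ.s n) = true ∧ AtRightTurn σ'.perm (σ.s n))) →
      σ'.o = σ.o ∧ σ'.s = Function.update σ.s n n)

/-- `π` contains the vincular pattern `pat` whose marked adjacent pair starts
at (0-indexed) position `k` of `pat`. -/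
def ContainsVincular (π pat : List ℕ) (k : ℕ) : Prop :=
  ∃ f : ℕ → ℕ, StrictMonoOn f (Set.Iio pat.length) ∧
    (∀ i < pat.length, f i < π.length) ∧
    f (k + 1) = f k + 1 ∧
    (∀ i < pat.length, ∀ j < pat.length,
      (pat.getD i 0 < pat.getD j 0 ↔ π.getD (f i) 0 < π.getD (f j) 0))

/-- 2-clumped permutations: those avoiding the vincular patterns
`3(51)24`, `3(51)42`, `24(51)3` and `42(51)3`. -/
def TwoClumped (π : List ℕ) : Prop :=
  ¬ ContainsVincular π [3, 5, 1, 2, 4] 1 ∧ ¬ ContainsVincular π [3, 5, 1, 4, 2] 1 ∧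
  ¬ ContainsVincular π [2, 4, 5, 1, 3] 2 ∧ ¬ ContainsVincular π [4, 2, 5, 1, 3] 2

/-- `S'_n`: the set of 2-clumped permutations in `S_n`. -/
def SClump (n : ℕ) : Set (List ℕ) := {l ∈ SymmList n | TwoClumped l}

/-- `B_n`: the permutations obtained from `1` by repeatedly inserting the new
largest value at the first or the last position. -/
def Bset : ℕ → Set (List ℕ)
  | 0 => {[]}
  | 1 => {[1]}
  | (n + 2) => {l | ∃ π ∈ Bset (n + 1), l = cins 1 π ∨ l = cins (n + 2) π}

namespace ZZ
open List

lemma symm_length {n : ℕ} {l : List ℕ} (h : l ∈ SymmList n) : l.length = n := by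
  have := h.length_eq; simpa using this

lemma symm_mem {n : ℕ} {l : List ℕ} (h : l ∈ SymmList n) {x : ℕ} (hx : x ∈ l) :
    1 ≤ x ∧ x ≤ n := by
  have := h.mem_iff.mp hx
  rw [List.mem_range'_1] at this
  omega

lemma symm_not_mem {n : ℕ} {l : List ℕ} (h : l ∈ SymmList n) {x : ℕ} (hx : n < x) :
    x ∉ l := fun hm => by have := (symm_mem h hm).2; omega

lemma pdel_eq {n : ℕ} {l : List ℕ} (h : l ∈ SymmList n) : pdel l = l.erase n := by
  rw [pdel, symm_length h]

lemma pdel_symm {n : ℕ} {l : List ℕ} (h : l ∈ SymmList (n+1)) : pdel l ∈ SymmList n := by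
  rw [pdel_eq h]
  have h1 : (l.erase (n+1)).Perm ((List.range' 1 (n+1)).erase (n+1)) := h.erase _
  have h2 : (List.range' 1 (n+1)).erase (n+1) = List.range' 1 n := by
    rw [List.range'_concat, List.erase_append_right]
    · simp; omega
    · intro hm; rw [List.mem_range'_1] at hm; omega
  rw [h2] at h1
  exact h1

lemma cins_length (i : ℕ) (l : List ℕ) : (cins i l).length = l.length + 1 := by
  simp [cins]; omega

lemma pdel_cins {n : ℕ} {q : List ℕ} (hq : q ∈ SymmList n) (i : ℕ) :
    pdel (cins i q) = q := by
  rw [pdel, cins_length, symm_length hq, cins, symm_length hq, List.erase_append_right,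
    List.erase_cons_head, List.take_append_drop]
  exact fun hm => symm_not_mem hq (by omega) (List.mem_of_mem_take hm)

lemma cins_one {n : ℕ} {q : List ℕ} (hq : q ∈ SymmList n) : cins 1 q = (n+1) :: q := by
  simp [cins, symm_length hq]

lemma cins_last {n : ℕ} {q : List ℕ} (hq : q ∈ SymmList n) : cins (n+1) q = q ++ [n+1] := by
  have hl := symm_length hq
  rw [cins, hl, Nat.add_sub_cancel, List.take_of_length_le (by omega),
    List.drop_of_length_le (by omega)]

lemma cins_ne {n : ℕ} {q : List ℕ} (hq : q ∈ SymmList n) {i1 i2 : ℕ}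
    (h1 : 1 ≤ i1) (h2 : i1 < i2) (h3 : i2 ≤ n + 1) : cins i1 q ≠ cins i2 q := by
  have hl := symm_length hq
  intro he
  have e1 : (cins i1 q)[i1-1]? = some (n+1) := by
    have ht : (q.take (i1-1)).length = i1 - 1 := by simp [hl]; omega
    rw [cins, List.getElem?_append_right (ht.le), ht, Nat.sub_self]
    simp [hl]
  have e2 : (cins i2 q)[i1-1]? = q[i1-1]? := by
    rw [cins, List.getElem?_append_left (by simp [hl]; omega), List.getElem?_take_of_lt (by omega)]
  have hq1 : i1 - 1 < q.length := by omega
  have : q[i1-1]? = some q[i1-1] := List.getElem?_eq_getElem hq1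
  have hle := (symm_mem hq (q.getElem_mem hq1)).2
  rw [he, e2, this] at e1
  simp at e1
  omega

end ZZ
namespace ZZ
open List

lemma zig_subset {n : ℕ} {L : Set (List ℕ)} (h : IsZigzag n L) : L ⊆ SymmList n := by
  cases h with
  | zero => intro l hl; rcases hl with rfl; simp [SymmList]
  | succ n L hs _ _ => exact hs

lemma zig_pdel {n : ℕ} {L : Set (List ℕ)} (h : IsZigzag (n+1) L) :
    IsZigzag n (pdel '' L) := by cases h with | succ n L _ hp _ => exact hp

lemma zig_cins {n : ℕ} {L : Set (List ℕ)} (h : IsZigzag (n+1) L) :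
    ∀ l ∈ pdel '' L, cins 1 l ∈ L ∧ cins (n + 1) l ∈ L := by
  cases h with | succ n L _ _ hc => exact hc

lemma mem_cSeq {L : Set (List ℕ)} {N : ℕ} {q x : List ℕ} :
    x ∈ cSeq L N q ↔ (∃ i, 1 ≤ i ∧ i ≤ N ∧ x = cins i q) ∧ x ∈ L := by
  simp only [cSeq, List.mem_filter, List.mem_map, List.mem_range'_1, decide_eq_true_eq]
  constructor
  · rintro ⟨⟨i, hi, rfl⟩, hL⟩; exact ⟨⟨i, by omega, by omega, rfl⟩, hL⟩
  · rintro ⟨⟨i, h1, h2, rfl⟩, hL⟩; exact ⟨⟨i, by omega, rfl⟩, hL⟩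

lemma Jseq_subset {n : ℕ} {L : Set (List ℕ)} (h : IsZigzag n L) :
    ∀ x ∈ Jseq n L, x ∈ L := by
  cases n with
  | zero =>
    cases h with
    | zero => intro x hx; simp [Jseq] at hx; simp [hx]
  | succ n =>
    intro x hx
    simp only [Jseq, List.mem_flatten] at hx
    obtain ⟨ch, hch, hx⟩ := hx
    obtain ⟨b, hb, e⟩ := List.exists_of_mem_mapIdx hch
    rw [← e] at hx
    have : x ∈ cSeq L (n+1) (Jseq n (pdel '' L))[b] := by
      by_cases hbb : b % 2 = 0
      · rw [if_pos hbb] at hx; exact List.mem_reverse.mp hx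
      · rw [if_neg hbb] at hx; exact hx
    exact (mem_cSeq.mp this).2

lemma cSeq_head {L : Set (List ℕ)} {N : ℕ} {q : List ℕ} (hN : 1 ≤ N)
    (h : cins 1 q ∈ L) : (cSeq L N q).head? = some (cins 1 q) := by
  obtain ⟨m, rfl⟩ : ∃ m, N = m + 1 := ⟨N - 1, by omega⟩
  have hpos : (fun x => @decide (x ∈ L) (Classical.propDecidable _)) (cins 1 q) = true := by
    simp [h]
  rw [cSeq, List.range'_succ, List.map_cons, List.filter_cons_of_pos (p := fun x => @decide (x ∈ L) (Classical.propDecidable _)) hpos]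
  rfl

lemma cSeq_getLast {L : Set (List ℕ)} {N : ℕ} {q : List ℕ} (hN : 1 ≤ N)
    (h : cins N q ∈ L) : (cSeq L N q).getLast? = some (cins N q) := by
  obtain ⟨m, rfl⟩ : ∃ m, N = m + 1 := ⟨N - 1, by omega⟩
  have h1m : (1 : ℕ) + 1 * m = m + 1 := by omega
  have hpos : (fun x => @decide (x ∈ L) (Classical.propDecidable _)) (cins (m+1) q) = true := by
    simp [h]
  rw [cSeq, List.range'_concat, h1m, List.map_append, List.filter_append, List.map_singleton,
    List.filter_cons_of_pos (p := fun x => @decide (x ∈ L) (Classical.propDecidable _)) hpos, List.filter_nil]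
  exact List.getLast?_concat

lemma cSeq_ne_nil {L : Set (List ℕ)} {N : ℕ} {q : List ℕ} (hN : 1 ≤ N)
    (h : cins 1 q ∈ L) : cSeq L N q ≠ [] := by
  intro he
  have := cSeq_head hN h
  rw [he] at this
  simp at this

lemma cSeq_nodup {n N : ℕ} {L : Set (List ℕ)} {q : List ℕ} (hq : q ∈ SymmList n)
    (hN : N ≤ n + 1) : (cSeq L N q).Nodup := by
  apply List.Nodup.filter
  apply List.Nodup.map_on _ (List.nodup_range')
  intro x hx y hy hxy
  rw [List.mem_range'_1] at hx hy
  by_contra hne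
  rcases Nat.lt_or_ge x y with hlt | hge
  · exact cins_ne hq (by omega) hlt (by omega) hxy
  · exact cins_ne hq (by omega) (by omega) (by omega) hxy.symm

end ZZ
namespace ZZ
open List

/-- The block function used in `Jseq`. -/
noncomputable def gfun (L : Set (List ℕ)) (N : ℕ) (b : ℕ) (q : List ℕ) : List (List ℕ) :=
  if b % 2 = 0 then (cSeq L N q).reverse else cSeq L N q

lemma Jseq_succ (n : ℕ) (L : Set (List ℕ)) :
    Jseq (n+1) L = ((Jseq n (pdel '' L)).mapIdx (gfun L (n+1))).flatten := rfl

lemma mem_gfun {L : Set (List ℕ)} {N b : ℕ} {q x : List ℕ} :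
    x ∈ gfun L N b q ↔ x ∈ cSeq L N q := by
  rw [gfun]; split <;> simp

lemma gfun_nodup {n N b : ℕ} {L : Set (List ℕ)} {q : List ℕ} (hq : q ∈ SymmList n)
    (hN : N ≤ n + 1) : (gfun L N b q).Nodup := by
  rw [gfun]; split
  · exact List.nodup_reverse.mpr (cSeq_nodup hq hN)
  · exact cSeq_nodup hq hN

lemma gfun_ne_nil {L : Set (List ℕ)} {N b : ℕ} {q : List ℕ} (hN : 1 ≤ N)
    (h : cins 1 q ∈ L) : gfun L N b q ≠ [] := by
  rw [gfun]; split
  · simpa using cSeq_ne_nil hN h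
  · exact cSeq_ne_nil hN h

lemma gfun_getLast {L : Set (List ℕ)} {N b : ℕ} {q : List ℕ} (hN : 1 ≤ N)
    (h1 : cins 1 q ∈ L) (hN' : cins N q ∈ L) :
    (gfun L N b q).getLast? = some (cins 1 q) ∨ (gfun L N b q).getLast? = some (cins N q) := by
  rw [gfun]; split
  · left; rw [List.getLast?_reverse]; exact cSeq_head hN h1
  · right; exact cSeq_getLast hN hN'

lemma gfun_head_ne_getLast {n : ℕ} {L : Set (List ℕ)} {N b : ℕ} {q ρ : List ℕ}
    (hq : q ∈ SymmList n) (hN2 : 2 ≤ N) (hNn : N ≤ n + 1)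
    (h1 : cins 1 q ∈ L) (hN' : cins N q ∈ L)
    (hhd : (gfun L N b q).head? = some ρ) : (gfun L N b q).getLast? ≠ some ρ := by
  have hne : cins 1 q ≠ cins N q := cins_ne hq le_rfl (by omega) (by omega)
  rw [gfun] at *
  split at hhd <;> rename_i hsp
  · rw [if_pos hsp, List.getLast?_reverse]
    rw [List.head?_reverse] at hhd
    rw [cSeq_getLast (by omega) hN'] at hhd
    rw [cSeq_head (by omega) h1]
    intro hc
    rw [← hhd] at hc
    exact hne (by injection hc)
  · rw [if_neg hsp, cSeq_getLast (by omega) hN']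
    rw [cSeq_head (by omega) h1] at hhd
    intro hc
    rw [← hc] at hhd
    exact hne (by injection hhd)

lemma Jseq_nodup {n : ℕ} {L : Set (List ℕ)} (h : IsZigzag n L) : (Jseq n L).Nodup := by
  induction n generalizing L with
  | zero => simp [Jseq]
  | succ n IH =>
    rw [Jseq_succ]
    have hPz := zig_pdel h
    have hPnodup := IH hPz
    have hPsub : ∀ x ∈ Jseq n (pdel '' L), x ∈ SymmList n :=
      fun x hx => zig_subset hPz (Jseq_subset hPz x hx)
    rw [List.nodup_flatten]
    constructor
    · intro ch hch
      obtain ⟨b, hb, e⟩ := List.exists_of_mem_mapIdx hch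
      rw [← e]
      exact gfun_nodup (hPsub _ (List.getElem_mem hb)) le_rfl
    · rw [List.pairwise_iff_getElem]
      intro a b ha hb hab x hxa hxb
      rw [List.getElem_mapIdx] at hxa hxb
      simp only [List.length_mapIdx] at ha hb
      obtain ⟨⟨i, _, _, rfl⟩, _⟩ := mem_cSeq.mp (mem_gfun.mp hxa)
      have e1 := pdel_cins (hPsub _ (List.getElem_mem ha)) i
      obtain ⟨⟨i', _, _, he'⟩, _⟩ := mem_cSeq.mp (mem_gfun.mp hxb)
      have e2 := pdel_cins (hPsub _ (List.getElem_mem hb)) i'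
      rw [← he'] at e2
      rw [e2] at e1
      exact absurd ((hPnodup.getElem_inj_iff).mp e1) (by omega)

lemma flatten_consec {α : Type u_1} (CH : List (List α)) (k : ℕ) {a b : α}
    (hne : ∀ ch ∈ CH, ch ≠ [])
    (ha : CH.flatten[k]? = some a) (hb : CH.flatten[k+1]? = some b) :
    (∃ (bi t : ℕ) (ch : List α), CH[bi]? = some ch ∧ ch[t]? = some a ∧ ch[t+1]? = some b) ∨
    (∃ (bi : ℕ) (ch1 ch2 : List α), CH[bi]? = some ch1 ∧ CH[bi+1]? = some ch2 ∧
      ch1.getLast? = some a ∧ ch2.head? = some b) := by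
  induction CH generalizing k with
  | nil => simp at ha
  | cons ch rest IHch =>
    rw [List.flatten_cons] at ha hb
    rcases Nat.lt_or_ge (k+1) ch.length with h1 | h1
    · left
      refine ⟨0, k, ch, by simp, ?_, ?_⟩
      · rw [List.getElem?_append_left (by omega)] at ha; exact ha
      · rw [List.getElem?_append_left h1] at hb; exact hb
    rcases Nat.lt_or_ge k ch.length with h2 | h2
    · right
      rw [List.getElem?_append_left h2] at ha
      rw [List.getElem?_append_right h1] at hb
      have hbl : k + 1 - ch.length = 0 := by omega
      rw [hbl] at hb
      cases rest with
      | nil => simp at hb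
      | cons ch2 rest2 =>
        refine ⟨0, ch, ch2, by simp, by simp, ?_, ?_⟩
        · rw [List.getLast?_eq_getElem?]
          have : ch.length - 1 = k := by omega
          rw [this]; exact ha
        · have hch2 : ch2 ≠ [] := hne ch2 (by simp)
          rw [List.flatten_cons, List.getElem?_append_left (List.length_pos_iff.mpr hch2)] at hb
          rw [List.head?_eq_getElem?]; exact hb
    · rw [List.getElem?_append_right (by omega)] at ha
      rw [List.getElem?_append_right (by omega)] at hb
      have hsh : k + 1 - ch.length = (k - ch.length) + 1 := by omega
      rw [hsh] at hb
      rcases IHch (k - ch.length) (fun c hc => hne c (by simp [hc])) ha hb with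
        ⟨bi, t, c, h3, h4, h5⟩ | ⟨bi, c1, c2, h3, h4, h5, h6⟩
      · exact Or.inl ⟨bi+1, t, c, by simpa using h3, h4, h5⟩
      · exact Or.inr ⟨bi+1, c1, c2, by simpa using h3, by simpa using h4, h5, h6⟩

end ZZ
namespace ZZ
open List

/-- The block of `x` at level `n+2`, as used in `sVec`. -/
noncomputable def cbarD (n : ℕ) (L : Set (List ℕ)) (x : List ℕ) : List (List ℕ) :=
  if ((Jseq (n+1) (pdel '' L)).idxOf (pdel x)) % 2 = 0
  then (cSeq L (n+2) (pdel x)).reverse else cSeq L (n+2) (pdel x)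

lemma cbarD_eq_gfun (n : ℕ) (L : Set (List ℕ)) (x : List ℕ) :
    cbarD n L x = gfun L (n+2) ((Jseq (n+1) (pdel '' L)).idxOf (pdel x)) (pdel x) := rfl

lemma sVec_eq (n : ℕ) (L : Set (List ℕ)) (π : List ℕ) (i : ℕ) : sVec (n+2) L π i =
    if (cbarD n L π).getLast? = some π then
      (if i ≤ n then sVec (n+1) (pdel '' L) (pdel π) i
       else if i = n+1 then n+1
       else if i = n+2 then sVec (n+1) (pdel '' L) (pdel π) (n+1) else 0)
    else
      (if i ≤ n+1 then sVec (n+1) (pdel '' L) (pdel π) i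
       else if i = n+2 then n+2 else 0) := rfl

lemma sVec_low {n i : ℕ} {L : Set (List ℕ)} {π : List ℕ} (h : i ≤ n) :
    sVec (n+2) L π i = sVec (n+1) (pdel '' L) (pdel π) i := by
  rw [sVec_eq]; split <;> first | rfl | (split_ifs <;> first | rfl | omega)

lemma sVec_mid_true {n : ℕ} {L : Set (List ℕ)} {π : List ℕ}
    (h : (cbarD n L π).getLast? = some π) : sVec (n+2) L π (n+1) = n+1 := by
  rw [sVec_eq, if_pos h, if_neg (by omega), if_pos rfl]

lemma sVec_mid_false {n : ℕ} {L : Set (List ℕ)} {π : List ℕ}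
    (h : ¬ (cbarD n L π).getLast? = some π) :
    sVec (n+2) L π (n+1) = sVec (n+1) (pdel '' L) (pdel π) (n+1) := by
  rw [sVec_eq, if_neg h, if_pos le_rfl]

lemma sVec_top_false {n : ℕ} {L : Set (List ℕ)} {π : List ℕ}
    (h : ¬ (cbarD n L π).getLast? = some π) : sVec (n+2) L π (n+2) = n+2 := by
  rw [sVec_eq, if_neg h, if_neg (by omega), if_pos rfl]

lemma indexOf_getElem' {α : Type*} [BEq α] [LawfulBEq α] {l : List α} (h : l.Nodup)
    (i : ℕ) (hi : i < l.length) : l.idxOf l[i] = i := by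
  induction l generalizing i with
  | nil => simp at hi
  | cons a tl IH =>
    cases i with
    | zero => simp [List.idxOf_cons]
    | succ m =>
      have hm : m < tl.length := by simpa using hi
      have hne : (a == (a :: tl)[m+1]) = false := by
        simp only [List.getElem_cons_succ, beq_eq_false_iff_ne, ne_eq]
        intro he; exact (List.nodup_cons.mp h).1 (he ▸ List.getElem_mem hm)
      rw [List.idxOf_cons, hne]
      simp only [List.getElem_cons_succ, cond_false]
      rw [IH (List.nodup_cons.mp h).2 m hm]

lemma consec_cases (n : ℕ) (L : Set (List ℕ)) (hL : IsZigzag (n+2) L) {k : ℕ} {π ρ : List ℕ}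
    (hπ : (Jseq (n+2) L)[k]? = some π) (hρ : (Jseq (n+2) L)[k+1]? = some ρ) :
    (pdel π = pdel ρ ∧ (cbarD n L π).getLast? ≠ some π) ∨
    (∃ b, (Jseq (n+1) (pdel '' L))[b]? = some (pdel π) ∧
          (Jseq (n+1) (pdel '' L))[b+1]? = some (pdel ρ) ∧
          (cbarD n L π).getLast? = some π ∧ (cbarD n L ρ).getLast? ≠ some ρ) := by
  have hPz : IsZigzag (n+1) (pdel '' L) := zig_pdel hL
  have hPnodup := Jseq_nodup hPz
  have hPmem : ∀ x ∈ Jseq (n+1) (pdel '' L), x ∈ pdel '' L := Jseq_subset hPz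
  have hPsymm : ∀ x ∈ Jseq (n+1) (pdel '' L), x ∈ SymmList (n+1) :=
    fun x hx => zig_subset hPz (hPmem x hx)
  set P := Jseq (n+1) (pdel '' L) with hPdef
  rw [Jseq_succ (n+1) L] at hπ hρ
  have hne : ∀ ch ∈ P.mapIdx (gfun L (n+2)), ch ≠ [] := by
    intro ch hch
    obtain ⟨b, hb, e⟩ := List.exists_of_mem_mapIdx hch
    rw [← e]
    exact gfun_ne_nil (by omega) ((zig_cins hL _ (hPmem _ (List.getElem_mem hb))).1)
  have hget : ∀ (bi : ℕ) (ch : List (List ℕ)), (P.mapIdx (gfun L (n+2)))[bi]? = some ch →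
      ∃ q, P[bi]? = some q ∧ ch = gfun L (n+2) bi q := by
    intro bi ch hch
    rw [List.getElem?_mapIdx] at hch
    cases hq : P[bi]? with
    | none => rw [hq] at hch; simp at hch
    | some q => rw [hq] at hch; simp at hch; exact ⟨q, rfl, hch.symm⟩
  have hmem_of_get : ∀ (q : List ℕ) (bi : ℕ), P[bi]? = some q → q ∈ P := by
    intro q bi hq
    rw [List.getElem?_eq_some_iff] at hq
    obtain ⟨h, e⟩ := hq
    exact e ▸ List.getElem_mem h
  rcases flatten_consec _ k hne hπ hρ with ⟨bi, t, ch, hbi, hta, htb⟩ |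
    ⟨bi, ch1, ch2, hb1, hb2, hlast, hhead⟩
  · left
    obtain ⟨q, hq, rfl⟩ := hget bi ch hbi
    have hqs : q ∈ SymmList (n+1) := hPsymm _ (hmem_of_get q bi hq)
    have hπch : π ∈ gfun L (n+2) bi q := by
      rw [List.getElem?_eq_some_iff] at hta
      obtain ⟨h, e⟩ := hta; exact e ▸ List.getElem_mem h
    have hρch : ρ ∈ gfun L (n+2) bi q := by
      rw [List.getElem?_eq_some_iff] at htb
      obtain ⟨h, e⟩ := htb; exact e ▸ List.getElem_mem h
    obtain ⟨⟨i, _, _, hπe⟩, _⟩ := mem_cSeq.mp (mem_gfun.mp hπch)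
    obtain ⟨⟨i', _, _, hρe⟩, _⟩ := mem_cSeq.mp (mem_gfun.mp hρch)
    have eπ : pdel π = q := by rw [hπe]; exact pdel_cins hqs i
    have eρ : pdel ρ = q := by rw [hρe]; exact pdel_cins hqs i'
    refine ⟨by rw [eπ, eρ], ?_⟩
    have hidx : P.idxOf (pdel π) = bi := by
      rw [eπ]
      rw [List.getElem?_eq_some_iff] at hq
      obtain ⟨h, e⟩ := hq
      rw [← e]
      exact indexOf_getElem' hPnodup bi h
    have hcb : cbarD n L π = gfun L (n+2) bi q := by
      rw [cbarD_eq_gfun, ← hPdef, hidx, eπ]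
    rw [hcb]
    intro hcon
    have hnd : (gfun L (n+2) bi q).Nodup := gfun_nodup hqs le_rfl
    rw [List.getLast?_eq_getElem?] at hcon
    rw [List.getElem?_eq_some_iff] at hta htb hcon
    obtain ⟨h1, e1⟩ := hta
    obtain ⟨h2, e2⟩ := htb
    obtain ⟨h3, e3⟩ := hcon
    rw [← e3] at e1
    have := (hnd.getElem_inj_iff).mp e1
    omega
  · right
    obtain ⟨q1, hq1, rfl⟩ := hget bi ch1 hb1
    obtain ⟨q2, hq2, rfl⟩ := hget (bi+1) ch2 hb2
    have hq1P := hmem_of_get q1 bi hq1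
    have hq2P := hmem_of_get q2 (bi+1) hq2
    have hq1s : q1 ∈ SymmList (n+1) := hPsymm _ hq1P
    have hq2s : q2 ∈ SymmList (n+1) := hPsymm _ hq2P
    have hπch : π ∈ gfun L (n+2) bi q1 := List.mem_of_getLast? hlast
    have hρch : ρ ∈ gfun L (n+2) (bi+1) q2 := List.mem_of_mem_head? hhead
    obtain ⟨⟨i, _, _, hπe⟩, _⟩ := mem_cSeq.mp (mem_gfun.mp hπch)
    obtain ⟨⟨i', _, _, hρe⟩, _⟩ := mem_cSeq.mp (mem_gfun.mp hρch)
    have eπ : pdel π = q1 := by rw [hπe]; exact pdel_cins hq1s i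
    have eρ : pdel ρ = q2 := by rw [hρe]; exact pdel_cins hq2s i'
    have hidx1 : P.idxOf (pdel π) = bi := by
      rw [eπ]
      rw [List.getElem?_eq_some_iff] at hq1
      obtain ⟨h, e⟩ := hq1
      rw [← e]
      exact indexOf_getElem' hPnodup bi h
    have hidx2 : P.idxOf (pdel ρ) = bi + 1 := by
      rw [eρ]
      rw [List.getElem?_eq_some_iff] at hq2
      obtain ⟨h, e⟩ := hq2
      rw [← e]
      exact indexOf_getElem' hPnodup (bi+1) h
    have hcb1 : cbarD n L π = gfun L (n+2) bi q1 := by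
      rw [cbarD_eq_gfun, ← hPdef, hidx1, eπ]
    have hcb2 : cbarD n L ρ = gfun L (n+2) (bi+1) q2 := by
      rw [cbarD_eq_gfun, ← hPdef, hidx2, eρ]
    refine ⟨bi, by rw [eπ]; exact hq1, by rw [eρ]; exact hq2, by rw [hcb1]; exact hlast, ?_⟩
    rw [hcb2]
    obtain ⟨hc1, hcN⟩ := zig_cins hL q2 (hPmem _ hq2P)
    exact gfun_head_ne_getLast hq2s (by omega) (by omega) hc1 hcN hhead

end ZZ
namespace ZZ
open List

/-- Symmetric jump relation. -/
def Jmp (π ρ : List ℕ) (j : ℕ) : Prop :=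
  ∃ A B C : List ℕ, B ≠ [] ∧ (∀ x ∈ B, x < j) ∧
    ((π = A ++ j :: (B ++ C) ∧ ρ = A ++ (B ++ j :: C)) ∨
     (ρ = A ++ j :: (B ++ C) ∧ π = A ++ (B ++ j :: C)))

lemma Jmp_of_jumps {π ρ : List ℕ} {j : ℕ}
    (h : ∃ d, LeftJump π ρ j d ∨ RightJump π ρ j d) : Jmp π ρ j := by
  obtain ⟨d, h | h⟩ := h
  · obtain ⟨hd, A, B, C, hBl, hlt, h1, h2⟩ := h
    exact ⟨A, B, C, by intro he; rw [he] at hBl; simp at hBl; omega, hlt, Or.inr ⟨h1, h2⟩⟩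
  · obtain ⟨hd, A, B, C, hBl, hlt, h1, h2⟩ := h
    exact ⟨A, B, C, by intro he; rw [he] at hBl; simp at hBl; omega, hlt, Or.inl ⟨h1, h2⟩⟩

lemma shape_ne {A B C : List ℕ} {j : ℕ} (hB : B ≠ []) (hlt : ∀ x ∈ B, x < j) :
    A ++ j :: (B ++ C) ≠ A ++ (B ++ j :: C) := by
  cases B with
  | nil => exact absurd rfl hB
  | cons b B' =>
    intro he
    have h1 : (A ++ j :: (b :: B' ++ C))[A.length]? = some j := by
      rw [List.getElem?_append_right le_rfl, Nat.sub_self]; rfl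
    have h2 : (A ++ (b :: B' ++ j :: C))[A.length]? = some b := by
      rw [List.getElem?_append_right le_rfl, Nat.sub_self]; simp
    rw [he, h2] at h1
    have := hlt b (by simp)
    injection h1 with h1
    omega

lemma Jmp_ne {π ρ : List ℕ} {j : ℕ} (h : Jmp π ρ j) : π ≠ ρ := by
  obtain ⟨A, B, C, hB, hlt, h | h⟩ := h
  · rw [h.1, h.2]; exact shape_ne hB hlt
  · rw [h.2, h.1]; exact fun he => shape_ne hB hlt he.symm

lemma Jmp_two_le {π ρ : List ℕ} {j n : ℕ} (h : Jmp π ρ j) (hπ : π ∈ SymmList n) : 2 ≤ j := by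
  obtain ⟨A, B, C, hB, hlt, hor⟩ := h
  cases B with
  | nil => exact absurd rfl hB
  | cons b B' =>
    have hbπ : b ∈ π := by
      rcases hor with ⟨h1, _⟩ | ⟨_, h2⟩
      · simp [h1]
      · simp [h2]
    have := (symm_mem hπ hbπ).1
    have := hlt b (by simp)
    omega

lemma Jmp_pdel {π ρ : List ℕ} {j N : ℕ} (h : Jmp π ρ j) (hπ : π ∈ SymmList (N+1))
    (hρ : ρ ∈ SymmList (N+1)) (hj : j < N + 1) : Jmp (pdel π) (pdel ρ) j := by
  have key : ∀ π ρ : List ℕ, π ∈ SymmList (N+1) → ρ ∈ SymmList (N+1) →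
      ∀ A B C : List ℕ, B ≠ [] → (∀ x ∈ B, x < j) →
      π = A ++ j :: (B ++ C) → ρ = A ++ (B ++ j :: C) → Jmp (pdel π) (pdel ρ) j := by
    intro π ρ hπ hρ A B C hB hlt h1 h2
    have hnB : (N+1) ∉ B := fun hm => by have := hlt _ hm; omega
    rw [pdel_eq hπ, pdel_eq hρ, h1, h2]
    by_cases hA : (N+1) ∈ A
    · rw [List.erase_append_left _ hA, List.erase_append_left _ hA]
      exact ⟨A.erase (N+1), B, C, hB, hlt, Or.inl ⟨rfl, rfl⟩⟩
    · rw [List.erase_append_right _ hA, List.erase_append_right _ hA,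
        List.erase_cons_tail (by simp; omega), List.erase_append_right _ hnB,
        List.erase_append_right _ hnB, List.erase_cons_tail (by simp; omega)]
      exact ⟨A, B, C.erase (N+1), hB, hlt, Or.inl ⟨rfl, rfl⟩⟩
  obtain ⟨A, B, C, hB, hlt, hor⟩ := h
  rcases hor with ⟨h1, h2⟩ | ⟨h1, h2⟩
  · exact key π ρ hπ hρ A B C hB hlt h1 h2
  · obtain ⟨A', B', C', hB', hlt', hor'⟩ := key ρ π hρ hπ A B C hB hlt h1 h2
    exact ⟨A', B', C', hB', hlt', hor'.symm⟩

lemma shape_pdel_j {x : List ℕ} {j : ℕ} {A B C : List ℕ} (hx : x ∈ SymmList j)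
    (hlt : ∀ y ∈ B, y < j) (h1 : x = A ++ j :: (B ++ C) ∨ x = A ++ (B ++ j :: C)) :
    pdel x = A ++ (B ++ C) := by
  have hcount : x.count j = 1 := by
    rw [hx.count_eq j]
    refine List.count_eq_one_of_mem (List.nodup_range') ?_
    rw [List.mem_range'_1]
    have : 1 ≤ j := by
      rcases h1 with h1 | h1 <;>
        exact (symm_mem hx (by rw [h1]; simp)).1
    omega
  have hnB : j ∉ B := fun hm => by have := hlt _ hm; omega
  rcases h1 with h1 | h1
  · have hnA : j ∉ A := by
      intro hm
      rw [h1, List.count_append, List.count_cons_self] at hcount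
      have : 1 ≤ List.count j A := List.one_le_count_iff.mpr  hm
      omega
    rw [pdel_eq hx, h1, List.erase_append_right _ hnA, List.erase_cons_head]
  · have hnA : j ∉ A := by
      intro hm
      rw [h1, List.count_append, List.count_append, List.count_cons_self] at hcount
      have : 1 ≤ List.count j A := List.one_le_count_iff.mpr hm
      omega
    rw [pdel_eq hx, h1, List.erase_append_right _ hnA, List.erase_append_right _ hnB,
      List.erase_cons_head]

lemma Jmp_pdel_j {π ρ : List ℕ} {j : ℕ} (h : Jmp π ρ j) (hπ : π ∈ SymmList j)
    (hρ : ρ ∈ SymmList j) : pdel π = pdel ρ := by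
  obtain ⟨A, B, C, hB, hlt, hor⟩ := h
  rcases hor with ⟨h1, h2⟩ | ⟨h1, h2⟩
  · rw [shape_pdel_j hπ hlt (Or.inl h1), shape_pdel_j hρ hlt (Or.inr h2)]
  · rw [shape_pdel_j hπ hlt (Or.inr h2), shape_pdel_j hρ hlt (Or.inl h1)]

end ZZ
namespace ZZ
open List

lemma mem_of_get? {α : Type*} {l : List α} {k : ℕ} {x : α} (h : l[k]? = some x) : x ∈ l := by
  rw [List.getElem?_eq_some_iff] at h
  obtain ⟨h, e⟩ := h
  exact e ▸ List.getElem_mem h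

lemma flag_rho_j {t : ℕ} {L : Set (List ℕ)} {ρ : List ℕ} (hL : IsZigzag (t+2) L)
    (hρL : ρ ∈ L)
    (hhd : ρ.head? ≠ some (t+2)) (hlast : ρ.getLast? ≠ some (t+2)) :
    (cbarD t L ρ).getLast? ≠ some ρ := by
  have hρs : ρ ∈ SymmList (t+2) := zig_subset hL hρL
  have hpar : pdel ρ ∈ pdel '' L := ⟨ρ, hρL, rfl⟩
  have hpars : pdel ρ ∈ SymmList (t+1) := pdel_symm hρs
  obtain ⟨hc1, hcN⟩ := zig_cins hL (pdel ρ) hpar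
  rw [cbarD_eq_gfun]
  rcases gfun_getLast (L := L) (b := (Jseq (t+1) (pdel '' L)).idxOf (pdel ρ))
    (by omega) hc1 hcN with he | he
  · rw [he]
    intro hcon
    injection hcon with hcon
    apply hhd
    rw [← hcon, cins_one hpars]
    rfl
  · rw [he]
    intro hcon
    injection hcon with hcon
    apply hlast
    rw [← hcon, cins_last hpars]
    exact List.getLast?_concat

lemma main_induction (t : ℕ) : ∀ (d : ℕ) (L : Set (List ℕ)) (k : ℕ) (π ρ : List ℕ),
    IsZigzag (t+2+d) L → (Jseq (t+2+d) L)[k]? = some π → (Jseq (t+2+d) L)[k+1]? = some ρ →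
    Jmp π ρ (t+2) → (pdel^[d] ρ).head? ≠ some (t+2) → (pdel^[d] ρ).getLast? ≠ some (t+2) →
    ((∀ i, 1 ≤ i → i ≤ t+2+d-1 → sVec (t+2+d) L ρ i = sVec (t+2+d) L π i) ∧
      sVec (t+2+d) L ρ (t+2+d) = t+2+d) := by
  intro d
  induction d with
  | zero =>
    intro L k π ρ hL hπ hρ hJ hhd hlast
    rw [Function.iterate_zero_apply] at hhd hlast
    have hπL : π ∈ L := Jseq_subset hL π (mem_of_get? hπ)
    have hρL : ρ ∈ L := Jseq_subset hL ρ (mem_of_get? hρ)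
    have hπs : π ∈ SymmList (t+2) := zig_subset hL hπL
    have hρs : ρ ∈ SymmList (t+2) := zig_subset hL hρL
    have hpp : pdel π = pdel ρ := Jmp_pdel_j hJ hπs hρs
    have hflagρ : (cbarD t L ρ).getLast? ≠ some ρ := flag_rho_j hL hρL hhd hlast
    have hflagπ : (cbarD t L π).getLast? ≠ some π := by
      rcases consec_cases t L hL hπ hρ with ⟨_, hf⟩ | ⟨b, hb1, hb2, _, _⟩
      · exact hf
      · exfalso
        rw [hpp] at hb1
        have hnd := Jseq_nodup (zig_pdel hL)
        rw [List.getElem?_eq_some_iff] at hb1 hb2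
        obtain ⟨h1, e1⟩ := hb1
        obtain ⟨h2, e2⟩ := hb2
        rw [← e2] at e1
        have := hnd.getElem_inj_iff.mp e1
        omega
    refine ⟨?_, sVec_top_false hflagρ⟩
    intro i hi1 hi2
    by_cases hc : i ≤ t
    · rw [sVec_low hc, sVec_low hc, hpp]
    · have hieq : i = t + 1 := by omega
      subst hieq
      rw [sVec_mid_false hflagρ, sVec_mid_false hflagπ, hpp]
  | succ d IH =>
    intro L k π ρ hL hπ hρ hJ hhd hlast
    have e1 : t+2+(d+1) = (t+d+1)+2 := by omega
    rw [e1] at hL hπ hρ ⊢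
    have hπL : π ∈ L := Jseq_subset hL π (mem_of_get? hπ)
    have hρL : ρ ∈ L := Jseq_subset hL ρ (mem_of_get? hρ)
    have hπs : π ∈ SymmList ((t+d+1)+2) := zig_subset hL hπL
    have hρs : ρ ∈ SymmList ((t+d+1)+2) := zig_subset hL hρL
    have hJ' : Jmp (pdel π) (pdel ρ) (t+2) :=
      Jmp_pdel hJ hπs hρs (by omega)
    rcases consec_cases (t+d+1) L hL hπ hρ with ⟨hpe, _⟩ | ⟨b, hb1, hb2, hflagπ, hflagρ⟩
    · exact absurd hpe (Jmp_ne hJ')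
    · have e2 : (t+d+1)+1 = t+2+d := by omega
      rw [e2] at hb1 hb2
      have hzig' : IsZigzag (t+2+d) (pdel '' L) := e2 ▸ zig_pdel hL
      rw [Function.iterate_succ_apply] at hhd hlast
      obtain ⟨IHa, IHb⟩ := IH (pdel '' L) b (pdel π) (pdel ρ) hzig' hb1 hb2 hJ' hhd hlast
      constructor
      · intro i hi1 hi2
        by_cases hc : i ≤ t+d+1
        · rw [sVec_low hc, sVec_low hc, ← e2] at *
          rw [e2]
          exact IHa i hi1 (by omega)
        · have hieq : i = (t+d+1)+1 := by omega
          subst hieq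
          rw [sVec_mid_false hflagρ, sVec_mid_true hflagπ, e2]
          exact IHb
      · exact sVec_top_false hflagρ

end ZZ


/-- Let `L_n ⊆ S_n` be a zigzag language and let `π, ρ, σ` be
three consecutive permutations in `J(L_n)`. If `ρ` is obtained from `π` by a
jump of a value `j < n`, `σ` is obtained from `ρ` by a jump of the value `n`,
and the value `j` is neither at the first nor at the last position of
`p^{n−j}(ρ)`, then `s_{n,i}^ρ = s_{n,i}^π` for all `i = 1,…,n−1`. -/
theorem sVec_stable_jn (n : ℕ) (L : Set (List ℕ)) (hL : IsZigzag n L)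
    (k : ℕ) (π ρ σ : List ℕ)
    (hπ : (Jseq n L)[k]? = some π) (hρ : (Jseq n L)[k + 1]? = some ρ)
    (hσ : (Jseq n L)[k + 2]? = some σ)
    (j : ℕ) (hj : j < n)
    (h1 : ∃ d, LeftJump π ρ j d ∨ RightJump π ρ j d)
    (h2 : ∃ d, LeftJump ρ σ n d ∨ RightJump ρ σ n d)
    (hnotfirst : (pdel^[n - j] ρ).head? ≠ some j)
    (hnotlast : (pdel^[n - j] ρ).getLast? ≠ some j) :
    ∀ i, 1 ≤ i → i ≤ n - 1 → sVec n L ρ i = sVec n L π i := by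
  intro i hi1 hi2
  have hJ : ZZ.Jmp π ρ j := ZZ.Jmp_of_jumps h1
  have hπL : π ∈ L := ZZ.Jseq_subset hL π (ZZ.mem_of_get? hπ)
  have hπs : π ∈ SymmList n := ZZ.zig_subset hL hπL
  have hj2 : 2 ≤ j := ZZ.Jmp_two_le hJ hπs
  obtain ⟨t, rfl⟩ : ∃ t, j = t + 2 := ⟨j - 2, by omega⟩
  obtain ⟨d, hd⟩ : ∃ d, n = (t+2) + d := ⟨n - (t+2), by omega⟩
  subst hd
  have hnd : (t+2) + d - (t+2) = d := by omega
  rw [hnd] at hnotfirst hnotlast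
  exact (ZZ.main_induction t d L k π ρ hL hπ hρ hJ hnotfirst hnotlast).1 i hi1 hi2
end

section
/- Let L_n ⊆ S_n be a zigzag language and let π, ρ, σ be three consecutive permutations in J(L_n). If ρ is obtained from π by a jump of a value j < n, σ is obtained from ρ by a jump of the value n, and the value j is at the first or last position of p^{n−j}(ρ), then s_{n,i}^ρ = s_{n,i}^π for all i ∈ {1,…,n−1} ∖ {j−1, j}, s_{n,j−1}^ρ = j−1, and s_{n,j}^ρ = s_{n,j−1}^π. -/
lemma symm_length {n : ℕ} {x : List ℕ} (h : x ∈ SymmList n) : x.length = n := by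
  simpa using h.length_eq

lemma symm_nodup {n : ℕ} {x : List ℕ} (h : x ∈ SymmList n) : x.Nodup :=
  h.nodup_iff.2 (List.nodup_range' (s := 1) (n := n))

lemma symm_mem {n : ℕ} {x : List ℕ} (h : x ∈ SymmList n) {a : ℕ} :
    a ∈ x ↔ 1 ≤ a ∧ a < n + 1 := by
  rw [h.mem_iff, List.mem_range']
  constructor
  · rintro ⟨i, hi, rfl⟩; omega
  · rintro ⟨h1, h2⟩; exact ⟨a - 1, by omega, by omega⟩

lemma symm_not_mem_self {n : ℕ} {x : List ℕ} (h : x ∈ SymmList n) : (n+1) ∉ x := by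
  rw [symm_mem h]; omega

lemma zigzag_subset {n : ℕ} {L : Set (List ℕ)} (h : IsZigzag n L) : L ⊆ SymmList n := by
  cases h with
  | zero => intro x hx; simp at hx; subst hx; exact List.Perm.refl _
  | succ n L h1 h2 h3 => exact h1

lemma cins_eq {n : ℕ} {x : List ℕ} (h : x ∈ SymmList n) (i : ℕ) :
    cins i x = x.take (i-1) ++ (n+1) :: x.drop (i-1) := by
  rw [cins, symm_length h]

lemma cins_mem_symm {n : ℕ} {x : List ℕ} (h : x ∈ SymmList n) (i : ℕ) :
    cins i x ∈ SymmList (n+1) := by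
  rw [cins_eq h]
  have h2 : List.range' 1 (n+1) = List.range' 1 n ++ [n+1] := by
    rw [List.range'_concat, Nat.one_mul, Nat.add_comm]
  show List.Perm _ _
  refine List.Perm.trans List.perm_middle ?_
  rw [List.take_append_drop, h2]
  refine List.Perm.trans (h.cons _) ?_
  simpa using (List.perm_middle (a := n+1) (l₁ := List.range' 1 n) (l₂ := ([]:List ℕ))).symm

lemma pdel_cins {n : ℕ} {x : List ℕ} (h : x ∈ SymmList n) (i : ℕ) :
    pdel (cins i x) = x := by
  have hlen : (cins i x).length = n + 1 := symm_length (cins_mem_symm h i)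
  rw [pdel, hlen, cins_eq h]
  rw [List.erase_append_right, List.erase_cons_head, List.take_append_drop]
  intro hmem
  exact symm_not_mem_self h (List.mem_of_mem_take hmem)

lemma cins_indexOf {n : ℕ} {x : List ℕ} (h : x ∈ SymmList n) {i : ℕ}
    (h1 : 1 ≤ i) (h2 : i ≤ n + 1) : (cins i x).idxOf (n+1) = i - 1 := by
  rw [cins_eq h, List.idxOf_append_of_notMem, List.idxOf_cons_self, List.length_take,
    symm_length h]
  · omega
  · intro hmem; exact symm_not_mem_self h (List.mem_of_mem_take hmem)

lemma cins_inj {n : ℕ} {x : List ℕ} (h : x ∈ SymmList n) {i i' : ℕ}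
    (h1 : 1 ≤ i) (h2 : i ≤ n + 1) (h1' : 1 ≤ i') (h2' : i' ≤ n + 1)
    (hii : cins i x = cins i' x) : i = i' := by
  have := cins_indexOf h h1 h2
  rw [hii, cins_indexOf h h1' h2'] at this
  omega
lemma mem_range1 {a n : ℕ} : a ∈ List.range' 1 n ↔ 1 ≤ a ∧ a ≤ n := by
  rw [List.mem_range']; constructor
  · rintro ⟨i, hi, rfl⟩; omega
  · rintro ⟨h1, h2⟩; exact ⟨a - 1, by omega, by omega⟩

lemma mem_cSeq {L : Set (List ℕ)} {n : ℕ} {κ x : List ℕ} :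
    x ∈ cSeq L n κ ↔ (∃ i, 1 ≤ i ∧ i ≤ n ∧ x = cins i κ) ∧ x ∈ L := by
  rw [cSeq, List.mem_filter, List.mem_map]
  constructor
  · rintro ⟨⟨i, hi, rfl⟩, h2⟩
    rw [mem_range1] at hi
    exact ⟨⟨i, hi.1, hi.2, rfl⟩, @of_decide_eq_true _ (Classical.propDecidable _) h2⟩
  · rintro ⟨⟨i, h1, h2, rfl⟩, hL⟩
    exact ⟨⟨i, mem_range1.2 ⟨h1, h2⟩, rfl⟩, @decide_eq_true _ (Classical.propDecidable _) hL⟩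

lemma cSeq_nodup {L : Set (List ℕ)} {n : ℕ} {κ : List ℕ} (hκ : κ ∈ SymmList n) :
    (cSeq L (n+1) κ).Nodup := by
  apply List.Nodup.filter
  apply List.Nodup.map_on ?_ (List.nodup_range' (s := 1) (n := n+1))
  intro i hi i' hi' he
  rw [mem_range1] at hi hi'
  exact cins_inj hκ hi.1 hi.2 hi'.1 hi'.2 he

lemma cSeq_head {L : Set (List ℕ)} {n : ℕ} {κ : List ℕ} (h : cins 1 κ ∈ L) :
    (cSeq L (n+1) κ).head? = some (cins 1 κ) := by
  rw [cSeq]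
  have h2 : List.range' 1 (n+1) = 1 :: List.range' 2 n := by rw [List.range'_succ]
  rw [h2, List.map_cons,
    List.filter_cons_of_pos (a := cins 1 κ) (@decide_eq_true _ (Classical.propDecidable _) h)]
  rfl

lemma cSeq_getLast {L : Set (List ℕ)} {n : ℕ} {κ : List ℕ} (h : cins (n+1) κ ∈ L) :
    (cSeq L (n+1) κ).getLast? = some (cins (n+1) κ) := by
  rw [← List.head?_reverse, cSeq, ← List.filter_reverse, ← List.map_reverse]
  have h2 : (List.range' 1 (n+1)).reverse = (n+1) :: (List.range' 1 n).reverse := by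
    rw [List.range'_concat]; simp [Nat.add_comm]
  rw [h2, List.map_cons,
    List.filter_cons_of_pos (a := cins (n+1) κ) (@decide_eq_true _ (Classical.propDecidable _) h)]
  rfl

/-- The block function used in `Jseq`. -/
noncomputable def blk (L : Set (List ℕ)) (m : ℕ) (k : ℕ) (κ : List ℕ) : List (List ℕ) :=
  if k % 2 = 0 then (cSeq L m κ).reverse else cSeq L m κ

lemma Jseq_succ (n : ℕ) (L : Set (List ℕ)) :
    Jseq (n+1) L = ((Jseq n (pdel '' L)).mapIdx (blk L (n+1))).flatten := rfl

lemma mem_blk {L : Set (List ℕ)} {m k : ℕ} {κ x : List ℕ} :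
    x ∈ blk L m k κ ↔ x ∈ cSeq L m κ := by
  rw [blk]; split
  · exact List.mem_reverse
  · exact Iff.rfl

lemma blk_pdel {L : Set (List ℕ)} {n k : ℕ} {κ x : List ℕ} (hκ : κ ∈ SymmList n)
    (hx : x ∈ blk L (n+1) k κ) : pdel x = κ ∧ x ∈ L := by
  rw [mem_blk, mem_cSeq] at hx
  obtain ⟨⟨i, _, _, rfl⟩, hL⟩ := hx
  exact ⟨pdel_cins hκ i, hL⟩

lemma blk_nodup {L : Set (List ℕ)} {n k : ℕ} {κ : List ℕ} (hκ : κ ∈ SymmList n) :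
    (blk L (n+1) k κ).Nodup := by
  rw [blk]; split
  · exact List.nodup_reverse.2 (cSeq_nodup hκ)
  · exact cSeq_nodup hκ

lemma Jseq_mem : ∀ {n : ℕ} {L : Set (List ℕ)}, IsZigzag n L → ∀ x ∈ Jseq n L, x ∈ L := by
  intro n L h
  cases h with
  | zero => intro x hx; simp [Jseq] at hx; simp [hx]
  | succ n L h1 h2 h3 =>
    intro x hx
    rw [Jseq_succ, List.mem_flatten] at hx
    obtain ⟨b, hb, hxb⟩ := hx
    rw [List.mem_mapIdx] at hb
    obtain ⟨k, hk, rfl⟩ := hb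
    have hκL : (Jseq n (pdel '' L))[k] ∈ pdel '' L := Jseq_mem h2 _ (List.getElem_mem _)
    have hκS : (Jseq n (pdel '' L))[k] ∈ SymmList n := zigzag_subset h2 hκL
    exact (blk_pdel hκS hxb).2

lemma Jseq_nodup : ∀ {n : ℕ} {L : Set (List ℕ)}, IsZigzag n L → (Jseq n L).Nodup := by
  intro n
  induction n with
  | zero => intro L h; cases h; simp [Jseq]
  | succ n ih =>
    intro L h
    cases h with
    | succ n L h1 h2 h3 =>
      rw [Jseq_succ, List.nodup_flatten]
      constructor
      · intro b hb
        rw [List.mem_mapIdx] at hb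
        obtain ⟨k, hk, rfl⟩ := hb
        exact blk_nodup (zigzag_subset h2 (Jseq_mem h2 _ (List.getElem_mem _)))
      · rw [List.pairwise_iff_getElem]
        intro a b ha hb hab
        rw [List.length_mapIdx] at ha hb
        rw [List.getElem_mapIdx, List.getElem_mapIdx]
        intro x hxa hxb
        have hM : ∀ {c : ℕ} (hc : c < (Jseq n (pdel '' L)).length),
            x ∈ blk L (n+1) c (Jseq n (pdel '' L))[c] → pdel x = (Jseq n (pdel '' L))[c] :=
          fun hc hx => (blk_pdel (zigzag_subset h2 (Jseq_mem h2 _ (List.getElem_mem _))) hx).1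
        have e1 := hM ha hxa
        have e2 := hM hb hxb
        have := ((ih h2).getElem_inj_iff (hi := ha) (hj := hb)).1 (e1.symm.trans e2)
        omega
/-- Unordered jump relation of the value `j`. -/
def Jump (j : ℕ) (x y : List ℕ) : Prop :=
  ∃ A B C : List ℕ, B ≠ [] ∧ (∀ b ∈ B, b < j) ∧
    ((x = A ++ j :: (B ++ C) ∧ y = A ++ (B ++ j :: C)) ∨
     (y = A ++ j :: (B ++ C) ∧ x = A ++ (B ++ j :: C)))

lemma Jump.symm {j : ℕ} {x y : List ℕ} (h : Jump j x y) : Jump j y x := by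
  obtain ⟨A, B, C, h1, h2, h3⟩ := h
  exact ⟨A, B, C, h1, h2, h3.symm⟩

lemma jump_of_jumps {π ρ : List ℕ} {j d : ℕ}
    (h : LeftJump π ρ j d ∨ RightJump π ρ j d) : Jump j π ρ := by
  rcases h with h | h
  · obtain ⟨hd, A, B, C, hB, hBlt, h1, h2⟩ := h
    exact ⟨A, B, C, by rw [← List.length_pos_iff_ne_nil]; omega, hBlt, Or.inr ⟨h1, h2⟩⟩
  · obtain ⟨hd, A, B, C, hB, hBlt, h1, h2⟩ := h
    exact ⟨A, B, C, by rw [← List.length_pos_iff_ne_nil]; omega, hBlt, Or.inl ⟨h1, h2⟩⟩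

lemma jump_core_ne {j : ℕ} {A B C : List ℕ} (hB : B ≠ []) (hBlt : ∀ b ∈ B, b < j) :
    A ++ j :: (B ++ C) ≠ A ++ (B ++ j :: C) := by
  intro he
  have h2 := congrArg (List.drop A.length) he
  rw [List.drop_left, List.drop_left] at h2
  cases B with
  | nil => exact hB rfl
  | cons b B =>
    have : j = b := by simpa using congrArg List.head? h2
    have := hBlt b (by simp)
    omega

lemma Jump.ne {j : ℕ} {x y : List ℕ} (h : Jump j x y) : x ≠ y := by
  obtain ⟨A, B, C, h1, h2, h3 | h3⟩ := h
  · rw [h3.1, h3.2]; exact jump_core_ne h1 h2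
  · rw [h3.1, h3.2]; exact (jump_core_ne h1 h2).symm

lemma jump_erase {j v : ℕ} {A B C : List ℕ} (hvj : v ≠ j) (hvB : v ∉ B) :
    ∃ A' C' : List ℕ, (A ++ j :: (B ++ C)).erase v = A' ++ j :: (B ++ C') ∧
      (A ++ (B ++ j :: C)).erase v = A' ++ (B ++ j :: C') := by
  by_cases hv : v ∈ A
  · exact ⟨A.erase v, C, by rw [List.erase_append_left _ hv],
      by rw [List.erase_append_left _ hv]⟩
  · refine ⟨A, C.erase v, ?_, ?_⟩
    · rw [List.erase_append_right _ hv, List.erase_cons_tail (by simpa using (Ne.symm hvj)),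
        List.erase_append_right _ hvB]
    · rw [List.erase_append_right _ hv, List.erase_append_right _ hvB,
        List.erase_cons_tail (by simpa using (Ne.symm hvj))]

lemma jump_pdel {m j : ℕ} {x y : List ℕ} (hx : x ∈ SymmList m) (hy : y ∈ SymmList m)
    (hj : j < m) (h : Jump j x y) : Jump j (pdel x) (pdel y) ∧ pdel x ≠ pdel y := by
  obtain ⟨A, B, C, h1, h2, h3⟩ := h
  have hmj : m ≠ j := by omega
  have hmB : m ∉ B := fun hm => by have := h2 m hm; omega
  obtain ⟨A', C', e1, e2⟩ := jump_erase (A := A) (B := B) (C := C) hmj hmB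
  have hpx : pdel x = x.erase m := by rw [pdel, symm_length hx]
  have hpy : pdel y = y.erase m := by rw [pdel, symm_length hy]
  rcases h3 with ⟨hxx, hyy⟩ | ⟨hyy, hxx⟩
  · rw [hpx, hpy, hxx, hyy, e1, e2]
    exact ⟨⟨A', B, C', h1, h2, Or.inl ⟨rfl, rfl⟩⟩, jump_core_ne h1 h2⟩
  · rw [hpx, hpy, hxx, hyy, e1, e2]
    exact ⟨⟨A', B, C', h1, h2, Or.inr ⟨rfl, rfl⟩⟩, (jump_core_ne h1 h2).symm⟩

lemma jump_pdel_eq {j : ℕ} {x y : List ℕ} (hx : x ∈ SymmList j) (hy : y ∈ SymmList j)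
    (h : Jump j x y) : pdel x = pdel y := by
  have key : ∀ z : List ℕ, z ∈ SymmList j → ∀ A B C : List ℕ, (∀ b ∈ B, b < j) →
      z = A ++ j :: (B ++ C) → pdel z = A ++ (B ++ C) ∧
      (∀ w : List ℕ, w ∈ SymmList j → w = A ++ (B ++ j :: C) → pdel w = A ++ (B ++ C)) := by
    intro z hz A B C hBlt hzz
    have hjA : j ∉ A := by
      have := symm_nodup hz
      rw [hzz, List.nodup_append] at this
      intro hj; exact this.2.2 j hj j (by simp) rfl
    have hjB : j ∉ B := fun hj => by have := hBlt j hj; omega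
    constructor
    · rw [pdel, symm_length hz, hzz, List.erase_append_right _ hjA, List.erase_cons_head]
    · intro w hw hww
      rw [pdel, symm_length hw, hww, List.erase_append_right _ hjA,
        List.erase_append_right _ hjB, List.erase_cons_head]
  obtain ⟨A, B, C, h1, h2, h3⟩ := h
  rcases h3 with ⟨hxx, hyy⟩ | ⟨hyy, hxx⟩
  · obtain ⟨e1, e2⟩ := key x hx A B C h2 hxx
    rw [e1, e2 y hy hyy]
  · obtain ⟨e1, e2⟩ := key y hy A B C h2 hyy
    rw [e1, e2 x hx hxx]

/-- Adjacency in a flatten of nonempty blocks. -/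
lemma flatten_adj {α : Type*} {bs : List (List α)} (hne : ∀ b ∈ bs, b ≠ []) {k : ℕ} {x y : α}
    (hx : bs.flatten[k]? = some x) (hy : bs.flatten[k+1]? = some y) :
    (∃ (m t : ℕ) (b : List α), bs[m]? = some b ∧ b[t]? = some x ∧ b[t+1]? = some y) ∨
    (∃ (m : ℕ) (b b' : List α), bs[m]? = some b ∧ bs[m+1]? = some b' ∧
      b.getLast? = some x ∧ b'.head? = some y) := by
  induction bs generalizing k with
  | nil => simp at hx
  | cons b bs ih =>
    rw [List.flatten_cons] at hx hy
    by_cases hk : k + 1 < b.length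
    · left
      refine ⟨0, k, b, by simp, ?_, ?_⟩
      · rw [List.getElem?_append_left (by omega)] at hx; exact hx
      · rw [List.getElem?_append_left hk] at hy; exact hy
    · by_cases hk2 : k + 1 = b.length
      · right
        have hxb : b[k]? = some x := by
          rw [List.getElem?_append_left (by omega)] at hx; exact hx
        have hyb : bs.flatten[0]? = some y := by
          rw [List.getElem?_append_right (by omega)] at hy
          simpa [hk2] using hy
        cases bs with
        | nil => simp at hyb
        | cons b' bs' =>
          refine ⟨0, b, b', by simp, by simp, ?_, ?_⟩
          · rw [List.getLast?_eq_getElem?, ← hk2]; simpa using hxb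
          · have hb' : b' ≠ [] := hne b' (by simp)
            rw [List.flatten_cons, List.getElem?_append_left
              (by cases b' <;> simp_all)] at hyb
            rw [List.head?_eq_getElem?]; exact hyb
      · have hk3 : b.length ≤ k := by omega
        have hx' : bs.flatten[k - b.length]? = some x := by
          rw [List.getElem?_append_right hk3] at hx; exact hx
        have hy' : bs.flatten[(k - b.length) + 1]? = some y := by
          rw [List.getElem?_append_right (by omega)] at hy
          have : k + 1 - b.length = k - b.length + 1 := by omega
          rwa [this] at hy
        rcases ih (fun b hb => hne b (by simp [hb])) hx' hy' with
          ⟨m, t, bb, hbb, ht1, ht2⟩ | ⟨m, bb, bb', h1, h2, h3, h4⟩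
        · exact Or.inl ⟨m+1, t, bb, by rw [List.getElem?_cons_succ]; exact hbb, ht1, ht2⟩
        · exact Or.inr ⟨m+1, bb, bb', by rw [List.getElem?_cons_succ]; exact h1, by rw [List.getElem?_cons_succ]; exact h2, h3, h4⟩
/-- The directed block used in the definition of `sVec` at level `m`. -/
noncomputable def cbar (L : Set (List ℕ)) (m : ℕ) (x : List ℕ) : List (List ℕ) :=
  if ((Jseq (m-1) (pdel '' L)).idxOf (pdel x)) % 2 = 0 then (cSeq L m (pdel x)).reverse
  else cSeq L m (pdel x)

lemma sVec_unfold_last {n : ℕ} {L : Set (List ℕ)} {x : List ℕ}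
    (h : (cbar L (n+2) x).getLast? = some x) (i : ℕ) :
    sVec (n+2) L x i =
      if i ≤ n then sVec (n+1) (pdel '' L) (pdel x) i
      else if i = n+1 then n+1
      else if i = n+2 then sVec (n+1) (pdel '' L) (pdel x) (n+1) else 0 := by
  simp only [sVec]
  have e : (if List.idxOf (pdel x) (Jseq (n+1) (pdel '' L)) % 2 = 0
      then (cSeq L (n+2) (pdel x)).reverse else cSeq L (n+2) (pdel x)) = cbar L (n+2) x := rfl
  rw [e, if_pos h]

lemma sVec_unfold_not_last {n : ℕ} {L : Set (List ℕ)} {x : List ℕ}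
    (h : ¬ ((cbar L (n+2) x).getLast? = some x)) (i : ℕ) :
    sVec (n+2) L x i =
      if i ≤ n+1 then sVec (n+1) (pdel '' L) (pdel x) i
      else if i = n+2 then n+2 else 0 := by
  simp only [sVec]
  have e : (if List.idxOf (pdel x) (Jseq (n+1) (pdel '' L)) % 2 = 0
      then (cSeq L (n+2) (pdel x)).reverse else cSeq L (n+2) (pdel x)) = cbar L (n+2) x := rfl
  rw [e, if_neg h]

lemma indexOf_eq : ∀ {l : List (List ℕ)}, l.Nodup → ∀ {m0 : ℕ} {κ : List ℕ},
    l[m0]? = some κ → l.idxOf κ = m0 := by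
  intro l
  induction l with
  | nil => intro _ m0 κ hm; simp at hm
  | cons a l ih =>
    intro h m0 κ hm
    cases m0 with
    | zero =>
      simp only [List.getElem?_cons_zero, Option.some.injEq] at hm
      subst hm
      rw [List.idxOf_cons]
      simp
    | succ m0 =>
      rw [List.getElem?_cons_succ] at hm
      have hκ : κ ∈ l := List.mem_of_getElem? hm
      have hne : (a == κ) = false := by
        simp only [beq_eq_false_iff_ne]
        rintro rfl
        rw [List.nodup_cons] at h
        exact h.1 hκ
      rw [List.idxOf_cons, hne, cond_false,
        ih (by rw [List.nodup_cons] at h; exact h.2) hm]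

lemma nodup_head_ne_getLast {α : Type*} {l : List α} (h : l.Nodup) {a : α}
    (hh : l.head? = some a) {u w : α} (hu : u ∈ l) (hw : w ∈ l) (huw : u ≠ w) :
    l.getLast? ≠ some a := by
  cases l with
  | nil => simp at hh
  | cons b t =>
    cases t with
    | nil =>
      simp at hu hw; subst hu; subst hw; exact absurd rfl huw
    | cons c t' =>
      simp only [List.head?_cons, Option.some.injEq] at hh
      rw [List.getLast?_cons_cons]
      intro hc
      have hmem : b ∈ c :: t' := List.mem_of_getLast? (by rw [hc, hh])
      simp only [List.nodup_cons] at h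
      exact h.1 hmem

/-- Main structural analysis for two adjacent permutations in `Jseq (m+1) L`
whose `pdel`s differ: they sit at the border of two consecutive blocks. -/
lemma step_analysis {m : ℕ} (hm : 1 ≤ m) {L : Set (List ℕ)} (hz : IsZigzag (m+1) L)
    {k : ℕ} {π ρ : List ℕ}
    (hπ : (Jseq (m+1) L)[k]? = some π) (hρ : (Jseq (m+1) L)[k+1]? = some ρ)
    (hne : pdel π ≠ pdel ρ) :
    ∃ m0 : ℕ, (Jseq m (pdel '' L))[m0]? = some (pdel π) ∧
      (Jseq m (pdel '' L))[m0+1]? = some (pdel ρ) ∧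
      (cbar L (m+1) π).getLast? = some π ∧
      ¬ ((cbar L (m+1) ρ).getLast? = some ρ) := by
  rcases hz with _ | ⟨_, _, hsub, hz', hc⟩
  set L' := pdel '' L with hL'
  have hbase : ∀ {c : ℕ} {κ : List ℕ}, (Jseq m L')[c]? = some κ → κ ∈ SymmList m :=
    fun hc' => zigzag_subset hz' (Jseq_mem hz' _ (List.mem_of_getElem? hc'))
  have hblk_ne : ∀ b ∈ (Jseq m L').mapIdx (blk L (m+1)), b ≠ [] := by
    intro b hb
    rw [List.mem_mapIdx] at hb
    obtain ⟨c, hcl, rfl⟩ := hb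
    have hκ : (Jseq m L')[c] ∈ L' := Jseq_mem hz' _ (List.getElem_mem _)
    have h1 : cins 1 (Jseq m L')[c] ∈ L := (hc _ hκ).1
    have : cins 1 (Jseq m L')[c] ∈ blk L (m+1) c (Jseq m L')[c] := by
      rw [mem_blk, mem_cSeq]
      exact ⟨⟨1, le_refl 1, by omega, rfl⟩, h1⟩
    intro hnil; rw [hnil] at this; simp at this
  rw [Jseq_succ] at hπ hρ
  rcases flatten_adj hblk_ne hπ hρ with ⟨m0, t, b, hb, ht1, ht2⟩ | ⟨m0, b, b', h1, h2, h3, h4⟩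
  · -- same block: contradiction with hne
    exfalso
    rw [List.getElem?_mapIdx] at hb
    obtain ⟨κ, hκ, rfl⟩ := Option.map_eq_some_iff.1 hb
    have hκS : κ ∈ SymmList m := hbase hκ
    have e1 := (blk_pdel hκS (List.mem_of_getElem? ht1)).1
    have e2 := (blk_pdel hκS (List.mem_of_getElem? ht2)).1
    exact hne (e1.trans e2.symm)
  · rw [List.getElem?_mapIdx] at h1 h2
    obtain ⟨κπ, hκπ, rfl⟩ := Option.map_eq_some_iff.1 h1
    obtain ⟨κρ, hκρ, rfl⟩ := Option.map_eq_some_iff.1 h2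
    have hκπS : κπ ∈ SymmList m := hbase hκπ
    have hκρS : κρ ∈ SymmList m := hbase hκρ
    have hπb : π ∈ blk L (m+1) m0 κπ := List.mem_of_getLast? h3
    have hρb : ρ ∈ blk L (m+1) (m0+1) κρ := by
      cases hbb : blk L (m+1) (m0+1) κρ with
      | nil => rw [hbb] at h4; simp at h4
      | cons u t => rw [hbb] at h4; simp at h4; rw [h4]; simp
    have hpπ : pdel π = κπ := (blk_pdel hκπS hπb).1
    have hpρ : pdel ρ = κρ := (blk_pdel hκρS hρb).1
    have hnod := Jseq_nodup hz'
    have hcbπ : cbar L (m+1) π = blk L (m+1) m0 κπ := by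
      rw [cbar, blk]
      simp only [Nat.add_sub_cancel, hpπ, indexOf_eq (l := Jseq m (pdel '' L)) hnod hκπ]
    have hcbρ : cbar L (m+1) ρ = blk L (m+1) (m0+1) κρ := by
      rw [cbar, blk]
      simp only [Nat.add_sub_cancel, hpρ, indexOf_eq (l := Jseq m (pdel '' L)) hnod hκρ]
    refine ⟨m0, by rw [hpπ]; exact hκπ, by rw [hpρ]; exact hκρ, ?_, ?_⟩
    · rw [hcbπ]; exact h3
    · rw [hcbρ]
      have hκρL : κρ ∈ L' := Jseq_mem hz' _ (List.mem_of_getElem? hκρ)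
      have hu : cins 1 κρ ∈ blk L (m+1) (m0+1) κρ := by
        rw [mem_blk, mem_cSeq]; exact ⟨⟨1, le_refl 1, by omega, rfl⟩, (hc _ hκρL).1⟩
      have hw : cins (m+1) κρ ∈ blk L (m+1) (m0+1) κρ := by
        rw [mem_blk, mem_cSeq]; exact ⟨⟨m+1, by omega, le_refl _, rfl⟩, (hc _ hκρL).2⟩
      have huw : cins 1 κρ ≠ cins (m+1) κρ := by
        intro he
        have := cins_inj hκρS (le_refl 1) (by omega) (by omega) (le_refl _) he
        omega
      exact nodup_head_ne_getLast (blk_nodup hκρS) h4 hu hw huw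
lemma boundary_cins {j : ℕ} (hj : 1 ≤ j) {ρ : List ℕ} (hρ : ρ ∈ SymmList j)
    (hb : ρ.head? = some j ∨ ρ.getLast? = some j) :
    ρ = cins 1 (pdel ρ) ∨ ρ = cins j (pdel ρ) := by
  have hlen : ρ.length = j := symm_length hρ
  rcases hb with hb | hb
  · left
    cases ρ with
    | nil => simp at hb
    | cons a t =>
      simp only [List.head?_cons, Option.some.injEq] at hb
      rw [pdel, hlen, hb, List.erase_cons_head, cins]
      have htl : t.length = j - 1 := by simp at hlen; omega
      rw [htl]
      have hj1 : j - 1 + 1 = j := by omega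
      rw [hj1]
      simp [hb]
  · right
    obtain ⟨ys, rfl⟩ := List.getLast?_eq_some_iff.1 hb
    have hys : ys.length = j - 1 := by simp at hlen; omega
    have hjys : j ∉ ys := by
      have := symm_nodup hρ
      rw [List.nodup_append] at this
      intro hmem
      exact this.2.2 j hmem j (by simp) rfl
    have hpd : pdel (ys ++ [j]) = ys := by
      rw [pdel, hlen, List.erase_append_right _ hjys, List.erase_cons_head, List.append_nil]
    rw [hpd, cins, hys]
    rw [List.take_of_length_le (by omega), List.drop_of_length_le (by omega)]
    have hj1 : j - 1 + 1 = j := by omega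
    rw [hj1]

lemma base_analysis {m : ℕ} (hm2 : 2 ≤ m) {L : Set (List ℕ)} (hz : IsZigzag m L)
    {k : ℕ} {x y : List ℕ}
    (hx : (Jseq m L)[k]? = some x) (hy : (Jseq m L)[k+1]? = some y)
    (heq : pdel x = pdel y)
    (hcb : y = cins 1 (pdel y) ∨ y = cins m (pdel y)) :
    ¬ ((cbar L m x).getLast? = some x) ∧ (cbar L m y).getLast? = some y := by
  obtain ⟨m', rfl⟩ : ∃ m', m = m' + 1 := ⟨m - 1, by omega⟩
  rcases hz with _ | ⟨_, _, hsub, hz', hc⟩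
  set L' := pdel '' L with hL'
  have hbase : ∀ {c : ℕ} {κ : List ℕ}, (Jseq m' L')[c]? = some κ → κ ∈ SymmList m' :=
    fun hc' => zigzag_subset hz' (Jseq_mem hz' _ (List.mem_of_getElem? hc'))
  have hblk_ne : ∀ b ∈ (Jseq m' L').mapIdx (blk L (m'+1)), b ≠ [] := by
    intro b hb
    rw [List.mem_mapIdx] at hb
    obtain ⟨c, hcl, rfl⟩ := hb
    have hκ : (Jseq m' L')[c] ∈ L' := Jseq_mem hz' _ (List.getElem_mem _)
    have h1 : cins 1 (Jseq m' L')[c] ∈ L := (hc _ hκ).1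
    have : cins 1 (Jseq m' L')[c] ∈ blk L (m'+1) c (Jseq m' L')[c] := by
      rw [mem_blk, mem_cSeq]
      exact ⟨⟨1, le_refl 1, by omega, rfl⟩, h1⟩
    intro hnil; rw [hnil] at this; simp at this
  rw [Jseq_succ] at hx hy
  have hnod := Jseq_nodup hz'
  rcases flatten_adj hblk_ne hx hy with ⟨m0, t, b, hb, ht1, ht2⟩ | ⟨m0, b, b', h1, h2, h3, h4⟩
  · -- same block
    rw [List.getElem?_mapIdx] at hb
    obtain ⟨κ, hκ, rfl⟩ := Option.map_eq_some_iff.1 hb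
    have hκS : κ ∈ SymmList m' := hbase hκ
    have hκL : κ ∈ L' := Jseq_mem hz' _ (List.mem_of_getElem? hκ)
    have hpx : pdel x = κ := (blk_pdel hκS (List.mem_of_getElem? ht1)).1
    have hpy : pdel y = κ := (blk_pdel hκS (List.mem_of_getElem? ht2)).1
    have hbnod : (blk L (m'+1) m0 κ).Nodup := blk_nodup hκS
    have hcbx : cbar L (m'+1) x = blk L (m'+1) m0 κ := by
      rw [cbar, blk]
      simp only [Nat.add_sub_cancel, hpx, indexOf_eq (l := Jseq m' (pdel '' L)) hnod hκ]
    have hcby : cbar L (m'+1) y = blk L (m'+1) m0 κ := by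
      rw [cbar, blk]
      simp only [Nat.add_sub_cancel, hpy, indexOf_eq (l := Jseq m' (pdel '' L)) hnod hκ]
    obtain ⟨hlt2, hg2⟩ := List.getElem?_eq_some_iff.1 ht2
    constructor
    · rw [hcbx]
      intro hlast
      rw [List.getLast?_eq_getElem?] at hlast
      obtain ⟨hlt1, hg1⟩ := List.getElem?_eq_some_iff.1 ht1
      obtain ⟨hltl, hgl⟩ := List.getElem?_eq_some_iff.1 hlast
      have := (hbnod.getElem_inj_iff (hi := hltl) (hj := hlt1)).1 (hgl.trans hg1.symm)
      omega
    · rw [hcby]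
      have hyne0 : (blk L (m'+1) m0 κ).head? ≠ some y := by
        rw [List.head?_eq_getElem?]
        intro h0
        obtain ⟨hlt0, hg0⟩ := List.getElem?_eq_some_iff.1 h0
        have := (hbnod.getElem_inj_iff (hi := hlt0) (hj := hlt2)).1 (hg0.trans hg2.symm)
        omega
      rw [hpy] at hcb
      rw [blk] at hyne0 ⊢
      by_cases hsplit : m0 % 2 = 0
      · -- reversed block
        rw [if_pos hsplit] at hyne0 ⊢
        rw [List.head?_reverse, cSeq_getLast (hc _ hκL).2] at hyne0
        have hy1 : y = cins 1 κ := by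
          rcases hcb with h | h
          · exact h
          · exact absurd (congrArg some h.symm) hyne0
        rw [List.getLast?_reverse, cSeq_head (hc _ hκL).1, hy1]
      · rw [if_neg hsplit] at hyne0 ⊢
        rw [cSeq_head (hc _ hκL).1] at hyne0
        have hy1 : y = cins (m'+1) κ := by
          rcases hcb with h | h
          · exact absurd (congrArg some h.symm) hyne0
          · exact h
        rw [cSeq_getLast (hc _ hκL).2, hy1]
  · -- boundary: impossible since pdel x = pdel y
    exfalso
    rw [List.getElem?_mapIdx] at h1 h2
    obtain ⟨κx, hκx, rfl⟩ := Option.map_eq_some_iff.1 h1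
    obtain ⟨κy, hκy, rfl⟩ := Option.map_eq_some_iff.1 h2
    have hpx : pdel x = κx := (blk_pdel (hbase hκx) (List.mem_of_getLast? h3)).1
    have hyb : y ∈ blk L (m'+1) (m0+1) κy := by
      cases hbb : blk L (m'+1) (m0+1) κy with
      | nil => rw [hbb] at h4; simp at h4
      | cons u tt => rw [hbb] at h4; simp at h4; rw [h4]; simp
    have hpy : pdel y = κy := (blk_pdel (hbase hκy) hyb).1
    have hee : κx = κy := by rw [← hpx, ← hpy, heq]
    obtain ⟨hlt1, hg1⟩ := List.getElem?_eq_some_iff.1 hκx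
    obtain ⟨hlt2, hg2⟩ := List.getElem?_eq_some_iff.1 hκy
    have := (hnod.getElem_inj_iff (hi := hlt1) (hj := hlt2)).1 (by rw [hg1, hg2, hee])
    omega
lemma main_ind (j : ℕ) (hj2 : 2 ≤ j) :
    ∀ m, j ≤ m → ∀ L : Set (List ℕ), IsZigzag m L → ∀ (k : ℕ) (x y : List ℕ),
      (Jseq m L)[k]? = some x → (Jseq m L)[k+1]? = some y → Jump j x y →
      ((pdel^[m-j] y).head? = some j ∨ (pdel^[m-j] y).getLast? = some j) →
      (∀ i, 1 ≤ i → i ≤ m - 1 → i ≠ j - 1 → i ≠ j → sVec m L y i = sVec m L x i) ∧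
      sVec m L y (j-1) = j-1 ∧ sVec m L y j = sVec m L x (j-1) ∧
      (j < m → sVec m L y m = m) := by
  intro m hm
  induction m, hm using Nat.le_induction with
  | base =>
    intro L hz k x y hx hy hjump hb
    simp only [Nat.sub_self, Function.iterate_zero, id_eq] at hb
    have hxS : x ∈ SymmList j := zigzag_subset hz (Jseq_mem hz _ (List.mem_of_getElem? hx))
    have hyS : y ∈ SymmList j := zigzag_subset hz (Jseq_mem hz _ (List.mem_of_getElem? hy))
    have heq : pdel x = pdel y := jump_pdel_eq hxS hyS hjump
    have hcb := boundary_cins (by omega) hyS hb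
    obtain ⟨hnx, hly⟩ := base_analysis hj2 hz hx hy heq hcb
    obtain ⟨jj, rfl⟩ : ∃ jj, j = jj + 2 := ⟨j - 2, by omega⟩
    have ux := sVec_unfold_not_last hnx
    have uy := sVec_unfold_last hly
    refine ⟨?_, ?_, ?_, ?_⟩
    · intro i h1 h2 h3 h4
      have hij : i ≤ jj := by omega
      rw [uy i, ux i, if_pos hij, if_pos (show i ≤ jj + 1 by omega), heq]
    · rw [uy (jj+2-1)]
      have e : jj + 2 - 1 = jj + 1 := by omega
      rw [e, if_neg (by omega), if_pos rfl]
    · rw [uy (jj+2), ux (jj+2-1)]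
      have e : jj + 2 - 1 = jj + 1 := by omega
      rw [e, if_neg (by omega), if_neg (by omega), if_pos rfl,
        if_pos (le_refl (jj+1)), heq]
    · intro h; omega
  | succ m hm ih =>
    intro L hz k x y hx hy hjump hb
    have hz' : IsZigzag m (pdel '' L) := by
      cases hz with | succ _ _ _ h _ => exact h
    have hxS : x ∈ SymmList (m+1) := zigzag_subset hz (Jseq_mem hz _ (List.mem_of_getElem? hx))
    have hyS : y ∈ SymmList (m+1) := zigzag_subset hz (Jseq_mem hz _ (List.mem_of_getElem? hy))
    obtain ⟨hjump', hne⟩ := jump_pdel hxS hyS (by omega) hjump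
    obtain ⟨m0, hκx, hκy, hlastx, hnlasty⟩ := step_analysis (by omega) hz hx hy hne
    have hb2 : ((pdel^[m-j] (pdel y)).head? = some j ∨
        (pdel^[m-j] (pdel y)).getLast? = some j) := by
      rw [show m + 1 - j = (m - j) + 1 from by omega, Function.iterate_succ_apply] at hb
      exact hb
    obtain ⟨I1, I2, I3, I4⟩ := ih (pdel '' L) hz' m0 (pdel x) (pdel y) hκx hκy hjump' hb2
    obtain ⟨mm, rfl⟩ : ∃ mm, m = mm + 1 := ⟨m - 1, by omega⟩
    have ux := sVec_unfold_last hlastx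
    have uy := sVec_unfold_not_last hnlasty
    refine ⟨?_, ?_, ?_, ?_⟩
    · intro i h1 h2 h3 h4
      rw [uy i, ux i]
      by_cases hi : i ≤ mm
      · rw [if_pos (show i ≤ mm + 1 by omega), if_pos hi]
        exact I1 i h1 (by omega) h3 h4
      · have hie : i = mm + 1 := by omega
        rw [if_pos (show i ≤ mm + 1 by omega), if_neg hi, if_pos hie, hie]
        exact I4 (by omega)
    · rw [uy (j-1), if_pos (show j - 1 ≤ mm + 1 by omega)]
      exact I2
    · rw [uy j, ux (j-1), if_pos (show j ≤ mm + 1 by omega),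
        if_pos (show j - 1 ≤ mm by omega)]
      exact I3
    · intro _
      rw [uy (mm+1+1), if_neg (by omega), if_pos rfl]
/-- Let `L_n ⊆ S_n` be a zigzag language and let `π, ρ, σ` be
three consecutive permutations in `J(L_n)`. If `ρ` is obtained from `π` by a
jump of a value `j < n`, `σ` is obtained from `ρ` by a jump of the value `n`,
and the value `j` is at the first or last position of `p^{n−j}(ρ)`, then
`s_{n,i}^ρ = s_{n,i}^π` for all `i ∈ {1,…,n−1} ∖ {j−1, j}`,
`s_{n,j−1}^ρ = j−1`, and `s_{n,j}^ρ = s_{n,j−1}^π`. -/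
theorem sVec_update_jn (n : ℕ) (L : Set (List ℕ)) (hL : IsZigzag n L)
    (k : ℕ) (π ρ σ : List ℕ)
    (hπ : (Jseq n L)[k]? = some π) (hρ : (Jseq n L)[k + 1]? = some ρ)
    (hσ : (Jseq n L)[k + 2]? = some σ)
    (j : ℕ) (hj : j < n)
    (h1 : ∃ d, LeftJump π ρ j d ∨ RightJump π ρ j d)
    (h2 : ∃ d, LeftJump ρ σ n d ∨ RightJump ρ σ n d)
    (hboundary : (pdel^[n - j] ρ).head? = some j ∨ (pdel^[n - j] ρ).getLast? = some j) :
    (∀ i, 1 ≤ i → i ≤ n - 1 → i ≠ j - 1 → i ≠ j → sVec n L ρ i = sVec n L π i) ∧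
    sVec n L ρ (j - 1) = j - 1 ∧
    sVec n L ρ j = sVec n L π (j - 1) := by

  have hjump : Jump j π ρ := by
    obtain ⟨d, h1⟩ := h1
    exact jump_of_jumps h1
  have hπS : π ∈ SymmList n := zigzag_subset hL (Jseq_mem hL _ (List.mem_of_getElem? hπ))
  have hj2 : 2 ≤ j := by
    obtain ⟨A, B, C, hB, hBlt, hor⟩ := hjump
    obtain ⟨b, hbB⟩ := List.exists_mem_of_ne_nil B hB
    have hbπ : b ∈ π := by
      rcases hor with ⟨h1', h2'⟩ | ⟨h1', h2'⟩
      · rw [h1']; simp [hbB]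
      · rw [h2']; simp [hbB]
    have := (symm_mem hπS).1 hbπ
    have := hBlt b hbB
    omega
  obtain ⟨c1, c2, c3, _⟩ := main_ind j hj2 n (by omega) L hL k π ρ hπ hρ hjump hboundary
  exact ⟨c1, c2, c3⟩
end
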